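/- Suppose e_{k+1} = (I − η(H − H⊥))e_k − E₂ holds for vectors e_k ∈ ℝⁿ, where H is symmetric with λ₀/2 ≤ λ_min(H) and ‖H‖ ≤ Λ, ‖H⊥‖ ≤ ρ, ‖E₂‖ ≤ σ‖e_k‖, and η ≤ 1/Λ. Then ‖e_{k+1}‖² ≤ (1 − ηλ₀(1 − ηΛ/2) + 2ηρ(1 + ηρ/2) + σ(2ηΛ + 2ηρ + σ + 2) + 2η²Λρ)·‖e_k‖². -/

import Mathlib

set_option maxHeartbeats 1000000


open Matrix

/-- Cauchy–Schwarz for a symmetric positive semidefinite operator. -/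
lemma psd_cauchy_schwarz {n : ℕ} (T : EuclideanSpace ℝ (Fin n) →L[ℝ] EuclideanSpace ℝ (Fin n))
    (hsym : ∀ u v : EuclideanSpace ℝ (Fin n), (inner ℝ (T u) v : ℝ) = inner ℝ u (T v))
    (hpos : ∀ v : EuclideanSpace ℝ (Fin n), (0:ℝ) ≤ inner ℝ v (T v))
    (v w : EuclideanSpace ℝ (Fin n)) :
    (inner ℝ v (T w) : ℝ) ^ 2 ≤ (inner ℝ v (T v) : ℝ) * (inner ℝ w (T w) : ℝ) := by
  have key : discrim ((inner ℝ w (T w) : ℝ)) (2 * (inner ℝ v (T w) : ℝ)) ((inner ℝ v (T v) : ℝ)) ≤ 0 := by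
    apply discrim_le_zero
    intro t
    have h := hpos (v + t • w)
    have expand : (inner ℝ (v + t • w) (T (v + t • w)) : ℝ)
        = (inner ℝ w (T w) : ℝ) * (t * t) + 2 * (inner ℝ v (T w) : ℝ) * t + (inner ℝ v (T v) : ℝ) := by
      have h1 : (inner ℝ w (T v) : ℝ) = inner ℝ v (T w) := by
        rw [← hsym w v, real_inner_comm]
      rw [map_add, _root_.map_smul, inner_add_left, inner_add_right, inner_add_right,
        real_inner_smul_left, real_inner_smul_left, real_inner_smul_right,
        real_inner_smul_right, h1]
      ring
    linarith [expand ▸ h]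
  rw [discrim] at key
  nlinarith [key]

theorem stmt_18 (n : ℕ) (H Hp : Matrix (Fin n) (Fin n) ℝ)
    (hH : H.IsHermitian) (hHp : Hp.IsHermitian)
    (lam0 Lam ρ σ η : ℝ) (hlam0 : 0 < lam0) (hρ : 0 ≤ ρ) (hσ : 0 ≤ σ)
    (hmin : ∀ v : EuclideanSpace ℝ (Fin n),
      lam0 / 2 * ‖v‖ ^ 2 ≤ (inner ℝ v (Matrix.toEuclideanCLM (𝕜 := ℝ) H v) : ℝ))
    (hLam : ‖Matrix.toEuclideanCLM (𝕜 := ℝ) H‖ ≤ Lam)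
    (hHpn : ‖Matrix.toEuclideanCLM (𝕜 := ℝ) Hp‖ ≤ ρ)
    (hη : 0 < η) (hηLam : η * Lam ≤ 1)
    (e e' E2 : EuclideanSpace ℝ (Fin n))
    (hE2 : ‖E2‖ ≤ σ * ‖e‖)
    (hstep : e' = Matrix.toEuclideanCLM (𝕜 := ℝ)
      ((1 : Matrix (Fin n) (Fin n) ℝ) - η • (H - Hp)) e - E2) :
    ‖e'‖ ^ 2 ≤
      (1 - η * lam0 * (1 - η * Lam / 2) + 2 * η * ρ * (1 + η * ρ / 2)
        + σ * (2 * η * Lam + 2 * η * ρ + σ + 2) + 2 * η ^ 2 * Lam * ρ) * ‖e‖ ^ 2 := by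
  set T := Matrix.toEuclideanCLM (𝕜 := ℝ) H with hT
  set P := Matrix.toEuclideanCLM (𝕜 := ℝ) Hp with hP
  have hLam0 : (0:ℝ) ≤ Lam := le_trans (norm_nonneg _) hLam
  -- self-adjointness of T
  have hTsa : IsSelfAdjoint T := by
    have : star T = T := by
      rw [hT, ← map_star]
      exact congrArg _ hH
    exact this
  have hTsym : ∀ u v : EuclideanSpace ℝ (Fin n), (inner ℝ (T u) v : ℝ) = inner ℝ u (T v) :=
    ContinuousLinearMap.isSelfAdjoint_iff_isSymmetric.mp hTsa
  have hTpos : ∀ v : EuclideanSpace ℝ (Fin n), (0:ℝ) ≤ inner ℝ v (T v) := by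
    intro v
    have := hmin v
    nlinarith [sq_nonneg ‖v‖]
  -- ‖T e‖² ≤ Λ ⟨e, T e⟩
  have hcs := psd_cauchy_schwarz T hTsym hTpos e (T e)
  have hTe2 : (inner ℝ e (T (T e)) : ℝ) = ‖T e‖ ^ 2 := by
    rw [← hTsym, real_inner_self_eq_norm_sq]
  have hTTe : (inner ℝ (T e) (T (T e)) : ℝ) ≤ Lam * ‖T e‖ ^ 2 := by
    calc (inner ℝ (T e) (T (T e)) : ℝ) ≤ ‖T e‖ * ‖T (T e)‖ := real_inner_le_norm _ _
      _ ≤ ‖T e‖ * (Lam * ‖T e‖) := by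
          gcongr
          calc ‖T (T e)‖ ≤ ‖T‖ * ‖T e‖ := T.le_opNorm _
            _ ≤ Lam * ‖T e‖ := by gcongr
      _ = Lam * ‖T e‖ ^ 2 := by ring
  set x : ℝ := inner ℝ e (T e) with hx
  have hxLam : ‖T e‖ ^ 2 ≤ Lam * x := by
    rcases eq_or_lt_of_le (sq_nonneg ‖T e‖) with h0 | h0
    · nlinarith [hTpos e]
    · have : (‖T e‖ ^ 2) ^ 2 ≤ x * (Lam * ‖T e‖ ^ 2) := by
        calc (‖T e‖ ^ 2) ^ 2 = (inner ℝ e (T (T e)) : ℝ) ^ 2 := by rw [hTe2]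
          _ ≤ x * (inner ℝ (T e) (T (T e)) : ℝ) := hcs
          _ ≤ x * (Lam * ‖T e‖ ^ 2) := by
              have := hTpos e; nlinarith [hTTe]
      nlinarith
  -- decompose e'
  have hdecomp : e' = (e - η • T e) + η • P e - E2 := by
    rw [hstep, map_sub, _root_.map_smul, map_sub, _root_.map_one, ← hT, ← hP]
    simp only [ContinuousLinearMap.sub_apply, ContinuousLinearMap.smul_apply,
      ContinuousLinearMap.one_apply, smul_sub]
    abel
  set u : EuclideanSpace ℝ (Fin n) := e - η • T e with hu
  have hb2 : ‖u‖ ^ 2 = ‖e‖ ^ 2 - 2 * η * x + η ^ 2 * ‖T e‖ ^ 2 := by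
    rw [hu, norm_sub_sq_real, inner_smul_right, norm_smul]
    simp [hx, mul_pow, abs_of_pos hη]
    ring
  have hxlow : lam0 / 2 * ‖e‖ ^ 2 ≤ x := hmin e
  have hb2le : ‖u‖ ^ 2 ≤ (1 - η * lam0 * (1 - η * Lam / 2)) * ‖e‖ ^ 2 := by
    rw [hb2]
    have h1 : η ^ 2 * ‖T e‖ ^ 2 ≤ η ^ 2 * (Lam * x) :=
      mul_le_mul_of_nonneg_left hxLam (sq_nonneg η)
    have h2 : η * (2 - η * Lam) * (lam0 / 2 * ‖e‖ ^ 2) ≤ η * (2 - η * Lam) * x := by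
      apply mul_le_mul_of_nonneg_left hxlow
      nlinarith
    nlinarith [h1, h2]
  have hble : ‖u‖ ≤ ‖e‖ := by
    have hsq : ‖u‖ ^ 2 ≤ ‖e‖ ^ 2 := by
      rw [hb2]
      have h1 : η ^ 2 * ‖T e‖ ^ 2 ≤ η ^ 2 * (Lam * x) :=
        mul_le_mul_of_nonneg_left hxLam (sq_nonneg η)
      have h4 : η ^ 2 * (Lam * x) ≤ η * x := by
        nlinarith [hTpos e, mul_le_mul_of_nonneg_left hηLam hη.le]
      nlinarith [hTpos e, mul_nonneg hη.le (hTpos e)]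
    nlinarith [norm_nonneg u, norm_nonneg e]
  -- bound on the perturbation term
  have hPe : ‖η • P e‖ ≤ η * ρ * ‖e‖ := by
    rw [norm_smul, Real.norm_eq_abs, abs_of_pos hη, mul_assoc]
    gcongr
    calc ‖P e‖ ≤ ‖P‖ * ‖e‖ := P.le_opNorm _
      _ ≤ ρ * ‖e‖ := by gcongr
  have htri : ‖e'‖ ≤ ‖u‖ + η * ρ * ‖e‖ + σ * ‖e‖ := by
    rw [hdecomp]
    calc ‖u + η • P e - E2‖ ≤ ‖u + η • P e‖ + ‖E2‖ := norm_sub_le _ _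
      _ ≤ ‖u‖ + ‖η • P e‖ + ‖E2‖ := by gcongr; exact norm_add_le _ _
      _ ≤ ‖u‖ + η * ρ * ‖e‖ + σ * ‖e‖ := by gcongr
  have hfinal : ‖e'‖ ^ 2 ≤ (‖u‖ + η * ρ * ‖e‖ + σ * ‖e‖) ^ 2 := by
    have h1 : (0:ℝ) ≤ ‖u‖ + η * ρ * ‖e‖ + σ * ‖e‖ := by
      have := norm_nonneg u; have := norm_nonneg e; positivity
    nlinarith [norm_nonneg e']
  nlinarith [hfinal, hb2le, hble, norm_nonneg u, norm_nonneg e, sq_nonneg ‖e‖,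
    mul_nonneg (mul_nonneg hη.le hLam0) hσ, mul_nonneg (mul_nonneg (mul_nonneg hη.le hη.le) hLam0) hρ,
    mul_nonneg (mul_nonneg hη.le hρ) (norm_nonneg e), mul_nonneg hσ (norm_nonneg e)]
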